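/- Let d be an odd prime, c_{j,k} ≥ 0 (j,k ∈ Z_d) with Σ_{j,k} c_{j,k} = 1, ρ = Σ_{j,k} c_{j,k} P̃_{j,k}, and for 0 ≤ t ≤ 1 set ρ(t) = ((1−t)/d²) I_{d²} + t ρ. If t(1 + d − d Σ_{j∈Z_d} c_{j,r}) ≤ 1 for every r ∈ Z_d, then ρ(t) is separable. In particular, ρ(t) is separable whenever t ≤ 1/(1+d). -/

import Mathlib

open Matrix Kronecker
open scoped ComplexOrder

/-- `η = exp(2πi/d)`. -/
noncomputable def eta (d : ℕ) : ℂ := Complex.exp (2 * Real.pi * Complex.I / d)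

/-- The maximally entangled vector `|Ω_{j,k}⟩ = (S_{j,k} ⊗ I) Σ_u |u⟩|u⟩
    = Σ_m η^{jm} |m⟩|m+k⟩`. -/
noncomputable def Omega (d : ℕ) (j k : ZMod d) : ZMod d × ZMod d → ℂ :=
  fun uv => if uv.2 = uv.1 + k then eta d ^ (j.val * uv.1.val) else 0

/-- The rank-one projection `P̃_{j,k} = (1/d)|Ω_{j,k}⟩⟨Ω_{j,k}|`. -/
noncomputable def Ptilde (d : ℕ) (j k : ZMod d) :
    Matrix (ZMod d × ZMod d) (ZMod d × ZMod d) ℂ :=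
  (d : ℂ)⁻¹ • Matrix.vecMulVec (Omega d j k) (star (Omega d j k))

/-- A bipartite density on `C^d ⊗ C^d` is separable if it is a finite convex
combination of Kronecker products of `d×d` densities. -/
def IsSeparableState {d : ℕ} [NeZero d]
    (ρ : Matrix (ZMod d × ZMod d) (ZMod d × ZMod d) ℂ) : Prop :=
  ∃ (n : ℕ) (w : Fin n → ℝ) (σ τ : Fin n → Matrix (ZMod d) (ZMod d) ℂ),
    (∀ i, 0 ≤ w i) ∧ (∑ i, w i = 1) ∧
    (∀ i, (σ i).PosSemidef ∧ (σ i).trace = 1) ∧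
    (∀ i, (τ i).PosSemidef ∧ (τ i).trace = 1) ∧
    ρ = ∑ i, (w i : ℂ) • (σ i ⊗ₖ τ i)

section Aux
variable {d : ℕ} [NeZero d]

noncomputable def zeta (d : ℕ) : ZMod d → ℂ := fun x => eta d ^ x.val

lemma eta_prim : IsPrimitiveRoot (eta d) d :=
  Complex.isPrimitiveRoot_exp d (NeZero.ne d)

lemma eta_pow_d : eta d ^ d = 1 := eta_prim.pow_eq_one

lemma eta_pow_mod (m : ℕ) : eta d ^ m = eta d ^ (m % d) := by
  conv_lhs => rw [← Nat.mod_add_div m d, pow_add, pow_mul, eta_pow_d, one_pow, mul_one]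

lemma zeta_add (x y : ZMod d) : zeta d (x + y) = zeta d x * zeta d y := by
  rw [zeta, zeta, zeta, ZMod.val_add, ← eta_pow_mod, pow_add]

lemma zeta_zero : zeta d 0 = 1 := by
  rw [zeta, ZMod.val_zero, pow_zero]

lemma zeta_nat (a b : ZMod d) : eta d ^ (a.val * b.val) = zeta d (a * b) := by
  rw [zeta, ZMod.val_mul, ← eta_pow_mod]

lemma zeta_mul_neg (x : ZMod d) : zeta d x * zeta d (-x) = 1 := by
  rw [← zeta_add, add_neg_cancel, zeta_zero]

lemma star_zeta (x : ZMod d) : star (zeta d x) = zeta d (-x) := by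
  have h1 : star (zeta d x) * zeta d x = 1 := by
    have : ‖zeta d x‖ = 1 := by
      rw [zeta, norm_pow, eta]
      have : (2 : ℂ) * Real.pi * Complex.I / d = ((2 * Real.pi / d : ℝ) : ℂ) * Complex.I := by
        push_cast; ring
      rw [this, Complex.norm_exp_ofReal_mul_I, one_pow]
    calc star (zeta d x) * zeta d x = ((Complex.normSq (zeta d x) : ℝ) : ℂ) := by
          rw [mul_comm]; exact Complex.mul_conj _
      _ = 1 := by rw [Complex.normSq_eq_norm_sq, this]; norm_num
  have h2 : zeta d x ≠ 0 := by
    intro h; rw [h, mul_zero] at h1; exact zero_ne_one h1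
  have h3 := zeta_mul_neg (d := d) x
  calc star (zeta d x) = star (zeta d x) * (zeta d x * zeta d (-x)) := by rw [h3, mul_one]
    _ = (star (zeta d x) * zeta d x) * zeta d (-x) := by ring
    _ = zeta d (-x) := by rw [h1, one_mul]

lemma sum_zeta (a : ZMod d) : ∑ r : ZMod d, zeta d (a * r) = if a = 0 then (d : ℂ) else 0 := by
  split_ifs with h
  · subst h; simp [zeta_zero, ZMod.card]
  · have key : zeta d a * ∑ r : ZMod d, zeta d (a * r) = ∑ r : ZMod d, zeta d (a * r) := by
      rw [Finset.mul_sum]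
      refine Fintype.sum_equiv (Equiv.addRight (1 : ZMod d)) _ _ fun r => ?_
      simp only [Equiv.coe_addRight]
      rw [← zeta_add]; ring_nf
    have hz : zeta d a ≠ 1 := by
      rw [zeta]
      intro hcon
      refine eta_prim.pow_ne_one_of_pos_of_lt ?_ (ZMod.val_lt a) hcon
      exact fun hv => h ((ZMod.val_eq_zero a).mp hv)
    have : (zeta d a - 1) * ∑ r : ZMod d, zeta d (a * r) = 0 := by
      rw [sub_mul, one_mul, key, sub_self]
    rcases mul_eq_zero.mp this with h1 | h2
    · exact absurd (by linear_combination h1) hz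
    · exact h2

end Aux

section Aux2
variable {d : ℕ} [NeZero d]

lemma psd_smul_vecMulVec (v : ZMod d → ℂ) (a : ℝ) (ha : 0 ≤ a) :
    ((a : ℂ) • vecMulVec v (star v)).PosSemidef := by
  rw [posSemidef_iff_dotProduct_mulVec]
  constructor
  · ext i j
    simp only [conjTranspose_apply, Matrix.smul_apply, vecMulVec_apply, Pi.star_apply,
      star_mul', star_star, smul_eq_mul, star_smul]
    rw [Complex.star_def, Complex.conj_ofReal]
    ring
  · intro x
    have hcalc : star x ⬝ᵥ ((a : ℂ) • vecMulVec v (star v)) *ᵥ x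
        = (a : ℂ) * (star (star v ⬝ᵥ x) * (star v ⬝ᵥ x)) := by
      simp only [dotProduct, mulVec, Matrix.smul_apply, vecMulVec_apply, Pi.star_apply,
        smul_eq_mul, star_dotProduct, Finset.mul_sum, Finset.sum_mul]
      rw [Finset.sum_comm]
      congr 1; ext i
      rw [star_sum, Finset.sum_mul, Finset.mul_sum]
      congr 1; ext j
      simp only [star_mul', star_star]
      ring
    rw [hcalc]
    exact mul_nonneg (Complex.zero_le_real.mpr ha) (star_mul_self_nonneg _)

lemma trace_smul_vecMulVec (v : ZMod d → ℂ) (a : ℂ) :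
    ((a : ℂ) • vecMulVec v (star v)).trace = a * ∑ u, v u * star (v u) := by
  simp only [trace, diag, Matrix.smul_apply, vecMulVec_apply, Pi.star_apply, smul_eq_mul,
    Finset.mul_sum]

lemma isSeparable_of_fintype {ι : Type} [Fintype ι]
    (ρ : Matrix (ZMod d × ZMod d) (ZMod d × ZMod d) ℂ)
    (w : ι → ℝ) (σ τ : ι → Matrix (ZMod d) (ZMod d) ℂ)
    (h0 : ∀ i, 0 ≤ w i) (h1 : ∑ i, w i = 1)
    (h2 : ∀ i, (σ i).PosSemidef ∧ (σ i).trace = 1)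
    (h3 : ∀ i, (τ i).PosSemidef ∧ (τ i).trace = 1)
    (h4 : ρ = ∑ i, (w i : ℂ) • (σ i ⊗ₖ τ i)) : IsSeparableState ρ := by
  obtain ⟨e⟩ : Nonempty (ι ≃ Fin (Fintype.card ι)) := ⟨Fintype.equivFin ι⟩
  refine ⟨Fintype.card ι, w ∘ e.symm, σ ∘ e.symm, τ ∘ e.symm,
    fun i => h0 _, ?_, fun i => h2 _, fun i => h3 _, ?_⟩
  · rw [← h1]; exact Fintype.sum_equiv e.symm _ _ fun i => rfl
  · rw [h4]; exact (Fintype.sum_equiv e.symm _ _ fun i => rfl).symm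

end Aux2
theorem main_sep (d : ℕ) [NeZero d] (hd : d.Prime) (hodd : Odd d)
    (c : ZMod d → ZMod d → ℝ) (hc : ∀ j k, 0 ≤ c j k)
    (hsum : ∑ j : ZMod d, ∑ k : ZMod d, c j k = 1)
    (t : ℝ) (ht0 : 0 ≤ t)
    (ρt : Matrix (ZMod d × ZMod d) (ZMod d × ZMod d) ℂ)
    (hρt : ρt = (((1 - t) / (d : ℝ) ^ 2 : ℝ) : ℂ)
          • (1 : Matrix (ZMod d × ZMod d) (ZMod d × ZMod d) ℂ)
        + (t : ℂ) • ∑ j : ZMod d, ∑ k : ZMod d, (c j k : ℂ) • Ptilde d j k)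
    (hcol : ∀ r : ZMod d, t * (1 + (d : ℝ) - (d : ℝ) * ∑ j : ZMod d, c j r) ≤ 1) :
    IsSeparableState ρt := by
  classical
  have hdn : (d : ℝ) ≠ 0 := Nat.cast_ne_zero.mpr (NeZero.ne d)
  have hdpos : (0 : ℝ) < d := Nat.cast_pos.mpr (Nat.pos_of_ne_zero (NeZero.ne d))
  have hdcn : (d : ℂ) ≠ 0 := Nat.cast_ne_zero.mpr (NeZero.ne d)
  set C : ZMod d → ℝ := fun k => ∑ j : ZMod d, c j k with hCdef
  set y : ZMod d → ℝ := fun k => (1 - t * (1 + d - d * C k)) / d with hydef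
  set chi : ZMod d → ZMod d → ZMod d → ℂ := fun q r u => zeta d (q * u * u + r * u) with hchidef
  set ev : ZMod d → ZMod d → ℂ := fun m u => if u = m then 1 else 0 with hevdef
  set sig : ZMod d → ZMod d → Matrix (ZMod d) (ZMod d) ℂ :=
    fun q r => (((d : ℝ)⁻¹ : ℝ) : ℂ) • vecMulVec (chi q r) (star (chi q r)) with hsigdef
  set pj : ZMod d → Matrix (ZMod d) (ZMod d) ℂ :=
    fun m => (((1 : ℝ) : ℝ) : ℂ) • vecMulVec (ev m) (star (ev m)) with hpjdef
  set ι := (ZMod d × ZMod d × ZMod d × ZMod d) ⊕ (ZMod d × ZMod d) with hι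
  set w : ι → ℝ := Sum.elim (fun p => t * c p.1 p.2.1 / d) (fun p => y p.1 / d) with hwdef
  set σ : ι → Matrix (ZMod d) (ZMod d) ℂ :=
    Sum.elim (fun p => sig p.2.2.1 p.2.2.2) (fun p => pj p.2) with hσdef
  set τ : ι → Matrix (ZMod d) (ZMod d) ℂ :=
    Sum.elim (fun p => sig (-p.2.2.1) (p.1 + 2 * p.2.2.1 * p.2.1 - p.2.2.2))
      (fun p => pj (p.2 + p.1)) with hτdef
  have hchiunit : ∀ q r u, chi q r u * star (chi q r u) = 1 := by
    intro q r u
    rw [hchidef]; dsimp only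
    rw [star_zeta, zeta_mul_neg]
  have hsigtr : ∀ q r, (sig q r).trace = 1 := by
    intro q r
    rw [hsigdef]; dsimp only
    rw [trace_smul_vecMulVec]
    rw [Finset.sum_congr rfl fun u _ => hchiunit q r u]
    simp [ZMod.card]
  have hpjtr : ∀ m, (pj m).trace = 1 := by
    intro m
    rw [hpjdef]; dsimp only
    rw [trace_smul_vecMulVec]
    rw [hevdef]; dsimp only
    rw [Finset.sum_congr rfl (g := fun u => if u = m then 1 else 0)
      fun u _ => by split_ifs with h <;> simp [h]]
    simp
  have h0 : ∀ i, 0 ≤ w i := by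
    rintro (⟨j0, k0, q, r⟩ | ⟨k, m⟩)
    · exact div_nonneg (mul_nonneg ht0 (hc _ _)) hdpos.le
    · refine div_nonneg ?_ hdpos.le
      rw [hydef]; dsimp only
      have := hcol k
      have : 0 ≤ 1 - t * (1 + d - d * C k) := by linarith [hcol k]
      positivity
  have hCsum : ∑ k : ZMod d, C k = 1 := by
    rw [hCdef]; dsimp only; rw [Finset.sum_comm]; exact hsum
  have h1 : ∑ i, w i = 1 := by
    rw [hwdef, Fintype.sum_sum_type]
    dsimp only [Sum.elim_inl, Sum.elim_inr]
    simp only [Fintype.sum_prod_type]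
    have b1 : ∀ j0 k0 : ZMod d,
        (∑ _q : ZMod d, ∑ _r : ZMod d, t * c j0 k0 / d) = (d : ℝ) * t * c j0 k0 := by
      intro j0 k0
      rw [Finset.sum_const, Finset.sum_const]
      simp only [Finset.card_univ, ZMod.card, nsmul_eq_mul]
      field_simp
    have b2 : ∀ k : ZMod d, (∑ _m : ZMod d, y k / d) = y k := by
      intro k
      rw [Finset.sum_const]
      simp only [Finset.card_univ, ZMod.card, nsmul_eq_mul]
      field_simp
    rw [Finset.sum_congr rfl fun j0 _ => Finset.sum_congr rfl fun k0 _ => b1 j0 k0,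
        Finset.sum_congr rfl fun k _ => b2 k]
    have yk : ∀ k, y k = (1 - t * (1 + d)) / d + t * C k := by
      intro k
      rw [hydef]; dsimp only
      field_simp
      ring
    rw [Finset.sum_congr rfl fun k _ => yk k, Finset.sum_add_distrib, Finset.sum_const]
    simp only [Finset.card_univ, ZMod.card, nsmul_eq_mul]
    have r1 : ∀ j0 : ZMod d, (∑ k0 : ZMod d, (d : ℝ) * t * c j0 k0)
        = (d : ℝ) * t * ∑ k0 : ZMod d, c j0 k0 := fun j0 => (Finset.mul_sum _ _ _).symm
    rw [Finset.sum_congr rfl fun j0 _ => r1 j0, ← Finset.mul_sum, hsum,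
        ← Finset.mul_sum, hCsum]
    field_simp
    ring
  have h2 : ∀ i, (σ i).PosSemidef ∧ (σ i).trace = 1 := by
    rintro (⟨j0, k0, q, r⟩ | ⟨k, m⟩)
    · exact ⟨psd_smul_vecMulVec _ _ (by positivity), hsigtr _ _⟩
    · exact ⟨psd_smul_vecMulVec _ _ (by norm_num), hpjtr _⟩
  have h3 : ∀ i, (τ i).PosSemidef ∧ (τ i).trace = 1 := by
    rintro (⟨j0, k0, q, r⟩ | ⟨k, m⟩)
    · exact ⟨psd_smul_vecMulVec _ _ (by positivity), hsigtr _ _⟩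
    · exact ⟨psd_smul_vecMulVec _ _ (by norm_num), hpjtr _⟩
  haveI : Fact (Nat.Prime d) := ⟨hd⟩
  have h2Z : (2 : ZMod d) ≠ 0 := by
    have : ((2 : ℕ) : ZMod d) ≠ 0 := by
      rw [Ne, ZMod.natCast_eq_zero_iff]
      intro hdvd
      obtain ⟨m, hm⟩ := hodd
      have h2 := Nat.le_of_dvd (by norm_num) hdvd
      have h3 := hd.two_le
      omega
    simpa using this
  have h4 : ρt = ∑ i, (w i : ℂ) • (σ i ⊗ₖ τ i) := by
    rw [hρt]
    ext ⟨u, v⟩ ⟨u', v'⟩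
    have rhs_eq : (∑ i, (w i : ℂ) • (σ i ⊗ₖ τ i)) (u, v) (u', v')
        = (∑ j0 : ZMod d, ∑ k0 : ZMod d, ∑ q : ZMod d, ∑ r : ZMod d,
            ((t * c j0 k0 / d : ℝ) : ℂ) *
              ((((d : ℝ)⁻¹ : ℝ) : ℂ) * (zeta d (q * u * u + r * u) *
                  zeta d (-(q * u' * u' + r * u'))) *
               ((((d : ℝ)⁻¹ : ℝ) : ℂ) * (zeta d (-q * v * v + (j0 + 2 * q * k0 - r) * v) *
                  zeta d (-(-q * v' * v' + (j0 + 2 * q * k0 - r) * v'))))))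
        + ∑ k : ZMod d, ∑ m : ZMod d,
            ((y k / d : ℝ) : ℂ) *
              ((ev m u * ev m u') * (ev (m + k) v * ev (m + k) v')) := by
      rw [Matrix.sum_apply, Fintype.sum_sum_type]
      congr 1
      · simp only [Fintype.sum_prod_type]
        refine Finset.sum_congr rfl fun j0 _ => Finset.sum_congr rfl fun k0 _ =>
          Finset.sum_congr rfl fun q _ => Finset.sum_congr rfl fun r _ => ?_
        simp only [hwdef, hσdef, hτdef, hsigdef, hchidef, Sum.elim_inl, Matrix.smul_apply,
          Matrix.kroneckerMap_apply, vecMulVec_apply, Pi.star_apply, smul_eq_mul, star_zeta]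
      · simp only [Fintype.sum_prod_type]
        refine Finset.sum_congr rfl fun k _ => Finset.sum_congr rfl fun m _ => ?_
        simp only [hwdef, hσdef, hτdef, hpjdef, Sum.elim_inr, Matrix.smul_apply,
          Matrix.kroneckerMap_apply, vecMulVec_apply, Pi.star_apply, smul_eq_mul]
        have evstar : ∀ a b : ZMod d, star (ev a b) = ev a b := by
          intro a b; rw [hevdef]; dsimp only; split_ifs <;> simp
        rw [evstar, evstar]
        push_cast
        ring
    have lhs_eq : ((((1 - t) / (d : ℝ) ^ 2 : ℝ) : ℂ)
          • (1 : Matrix (ZMod d × ZMod d) (ZMod d × ZMod d) ℂ)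
        + (t : ℂ) • ∑ j : ZMod d, ∑ k : ZMod d, (c j k : ℂ) • Ptilde d j k) (u, v) (u', v')
        = (((1 - t) / (d : ℝ) ^ 2 : ℝ) : ℂ) * (if (u, v) = (u', v') then 1 else 0)
          + (t : ℂ) * ((d : ℂ)⁻¹ * ((if v' = u' + (v - u) then 1 else 0) *
              ∑ j : ZMod d, ((c j (v - u) : ℝ) : ℂ) * zeta d (j * (u - u')))) := by
      simp only [Matrix.add_apply, Matrix.smul_apply, Matrix.sum_apply, Matrix.one_apply,
        smul_eq_mul]
      congr 1
      have inner : ∀ j : ZMod d, ∑ k : ZMod d, (c j k : ℂ) * Ptilde d j k (u, v) (u', v')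
          = (d : ℂ)⁻¹ * ((if v' = u' + (v - u) then 1 else 0) *
              (((c j (v - u) : ℝ) : ℂ) * zeta d (j * (u - u')))) := by
        intro j
        rw [Finset.sum_eq_single (v - u)]
        · simp only [Ptilde, Matrix.smul_apply, vecMulVec_apply, Pi.star_apply, smul_eq_mul,
            Omega]
          rw [if_pos (show v = u + (v - u) from by ring)]
          rw [zeta_nat, apply_ite (star : ℂ → ℂ), star_zero, zeta_nat, star_zeta]
          split_ifs with hcond
          · rw [show zeta d (j * u) * zeta d (-(j * u')) = zeta d (j * (u - u')) from by
              rw [← zeta_add]; congr 1; ring]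
            ring
          · ring
        · intro k _ hk
          simp only [Ptilde, Matrix.smul_apply, vecMulVec_apply, Pi.star_apply, smul_eq_mul,
            Omega]
          rw [if_neg (show ¬ v = u + k from fun hh => hk (by rw [hh]; ring))]
          ring
        · intro hmem; exact absurd (Finset.mem_univ _) hmem
      rw [Finset.sum_congr rfl fun j _ => inner j, ← Finset.mul_sum, ← Finset.mul_sum]
    rw [lhs_eq, rhs_eq]
    have B1fold : ∀ j0 k0 q : ZMod d,
        (∑ r : ZMod d, ((t * c j0 k0 / d : ℝ) : ℂ) *
            ((((d : ℝ)⁻¹ : ℝ) : ℂ) * (zeta d (q * u * u + r * u) *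
                zeta d (-(q * u' * u' + r * u'))) *
             ((((d : ℝ)⁻¹ : ℝ) : ℂ) * (zeta d (-q * v * v + (j0 + 2 * q * k0 - r) * v) *
                zeta d (-(-q * v' * v' + (j0 + 2 * q * k0 - r) * v'))))))
        = ((t * c j0 k0 / d : ℝ) : ℂ) * (((d : ℝ)⁻¹ : ℝ) : ℂ) * (((d : ℝ)⁻¹ : ℝ) : ℂ) *
            zeta d (q * (u * u - u' * u' - v * v + v' * v') + (j0 + 2 * q * k0) * (v - v')) *
            (if u - u' - v + v' = 0 then (d : ℂ) else 0) := by
      intro j0 k0 q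
      have hterm : ∀ r : ZMod d,
          ((t * c j0 k0 / d : ℝ) : ℂ) *
            ((((d : ℝ)⁻¹ : ℝ) : ℂ) * (zeta d (q * u * u + r * u) *
                zeta d (-(q * u' * u' + r * u'))) *
             ((((d : ℝ)⁻¹ : ℝ) : ℂ) * (zeta d (-q * v * v + (j0 + 2 * q * k0 - r) * v) *
                zeta d (-(-q * v' * v' + (j0 + 2 * q * k0 - r) * v')))))
          = (((t * c j0 k0 / d : ℝ) : ℂ) * (((d : ℝ)⁻¹ : ℝ) : ℂ) * (((d : ℝ)⁻¹ : ℝ) : ℂ) *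
              zeta d (q * (u * u - u' * u' - v * v + v' * v') + (j0 + 2 * q * k0) * (v - v'))) *
              zeta d ((u - u' - v + v') * r) := by
        intro r
        have z1 : zeta d (q * u * u + r * u) * zeta d (-(q * u' * u' + r * u'))
            = zeta d ((q * u * u + r * u) + -(q * u' * u' + r * u')) := (zeta_add _ _).symm
        have z2 : zeta d (-q * v * v + (j0 + 2 * q * k0 - r) * v) *
              zeta d (-(-q * v' * v' + (j0 + 2 * q * k0 - r) * v'))
            = zeta d ((-q * v * v + (j0 + 2 * q * k0 - r) * v) +
                -(-q * v' * v' + (j0 + 2 * q * k0 - r) * v')) := (zeta_add _ _).symm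
        have z3 : zeta d ((q * u * u + r * u) + -(q * u' * u' + r * u')) *
              zeta d ((-q * v * v + (j0 + 2 * q * k0 - r) * v) +
                -(-q * v' * v' + (j0 + 2 * q * k0 - r) * v'))
            = zeta d (q * (u * u - u' * u' - v * v + v' * v') + (j0 + 2 * q * k0) * (v - v')) *
              zeta d ((u - u' - v + v') * r) := by
          rw [← zeta_add, ← zeta_add]; congr 1; ring
        calc ((t * c j0 k0 / d : ℝ) : ℂ) *
            ((((d : ℝ)⁻¹ : ℝ) : ℂ) * (zeta d (q * u * u + r * u) *
                zeta d (-(q * u' * u' + r * u'))) *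
             ((((d : ℝ)⁻¹ : ℝ) : ℂ) * (zeta d (-q * v * v + (j0 + 2 * q * k0 - r) * v) *
                zeta d (-(-q * v' * v' + (j0 + 2 * q * k0 - r) * v')))))
            = ((t * c j0 k0 / d : ℝ) : ℂ) * (((d : ℝ)⁻¹ : ℝ) : ℂ) * (((d : ℝ)⁻¹ : ℝ) : ℂ) *
              (zeta d ((q * u * u + r * u) + -(q * u' * u' + r * u')) *
               zeta d ((-q * v * v + (j0 + 2 * q * k0 - r) * v) +
                -(-q * v' * v' + (j0 + 2 * q * k0 - r) * v'))) := by rw [← z1, ← z2]; ring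
          _ = _ := by rw [z3]; ring
      rw [Finset.sum_congr rfl fun r _ => hterm r, ← Finset.mul_sum, sum_zeta]
    rw [Finset.sum_congr rfl fun j0 (_ : j0 ∈ Finset.univ) => Finset.sum_congr rfl
      fun k0 (_ : k0 ∈ Finset.univ) => Finset.sum_congr rfl
      fun q (_ : q ∈ Finset.univ) => B1fold j0 k0 q]
    have B2eval : (∑ k : ZMod d, ∑ m : ZMod d,
          ((y k / d : ℝ) : ℂ) * ((ev m u * ev m u') * (ev (m + k) v * ev (m + k) v')))
        = if u' = u ∧ v' = v then ((y (v - u) / d : ℝ) : ℂ) else 0 := by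
      split_ifs with hcase
      · obtain ⟨h1, h2⟩ := hcase
        rw [h1, h2]
        rw [Finset.sum_eq_single (v - u)]
        · rw [Finset.sum_eq_single u]
          · rw [hevdef]; dsimp only
            rw [if_pos rfl, if_pos (show v = u + (v - u) from by ring)]
            ring
          · intro m _ hm
            rw [hevdef]; dsimp only
            rw [if_neg (fun hh => hm hh.symm)]
            ring
          · intro hmem; exact absurd (Finset.mem_univ _) hmem
        · intro k _ hk
          refine Finset.sum_eq_zero fun m _ => ?_
          rw [hevdef]; dsimp only
          by_cases hm : u = m
          · rw [if_neg (show ¬ v = m + k from fun hh => hk (by rw [hh, ← hm]; ring))]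
            ring
          · rw [if_neg hm]; ring
        · intro hmem; exact absurd (Finset.mem_univ _) hmem
      · refine Finset.sum_eq_zero fun k _ => Finset.sum_eq_zero fun m _ => ?_
        rw [hevdef]; dsimp only
        by_cases h1 : u = m
        · by_cases h2 : u' = m
          · by_cases h3 : v = m + k
            · by_cases h4 : v' = m + k
              · exact absurd ⟨h2.trans h1.symm, h4.trans h3.symm⟩ hcase
              · rw [if_neg h4]; ring
            · rw [if_neg h3]; ring
          · rw [if_neg h2]; ring
        · rw [if_neg h1]; ring
    rw [B2eval]
    by_cases hDel : u - u' - v + v' = 0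
    · have hv' : v' = u' + v - u := by linear_combination hDel
      subst hv'
      by_cases huu : u = u'
      · subst huu
        rw [show (u + v - u : ZMod d) = v from by ring]
        rw [if_pos rfl, if_pos (show v = u + (v - u) from by ring),
          if_pos (show u = u ∧ v = v from ⟨rfl, rfl⟩)]
        have zj : ∀ j : ZMod d, ((c j (v - u) : ℝ) : ℂ) * zeta d (j * (u - u))
            = ((c j (v - u) : ℝ) : ℂ) := by
          intro j
          rw [show j * (u - u) = 0 from by ring, zeta_zero, mul_one]
        rw [Finset.sum_congr rfl fun j _ => zj j]
        have zB : ∀ j0 k0 : ZMod d, (∑ q : ZMod d,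
            ((t * c j0 k0 / d : ℝ) : ℂ) * (((d : ℝ)⁻¹ : ℝ) : ℂ) * (((d : ℝ)⁻¹ : ℝ) : ℂ) *
              zeta d (q * (u * u - u * u - v * v + v * v) + (j0 + 2 * q * k0) * (v - v)) *
              (if u - u - v + v = 0 then (d : ℂ) else 0))
            = (t : ℂ) * ((c j0 k0 : ℝ) : ℂ) * ((d : ℂ))⁻¹ := by
          intro j0 k0
          have zterm : ∀ q : ZMod d,
              ((t * c j0 k0 / d : ℝ) : ℂ) * (((d : ℝ)⁻¹ : ℝ) : ℂ) * (((d : ℝ)⁻¹ : ℝ) : ℂ) *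
                zeta d (q * (u * u - u * u - v * v + v * v) + (j0 + 2 * q * k0) * (v - v)) *
                (if u - u - v + v = 0 then (d : ℂ) else 0)
              = (t : ℂ) * ((c j0 k0 : ℝ) : ℂ) * ((d : ℂ))⁻¹ * ((d : ℂ))⁻¹ := by
            intro q
            rw [show q * (u * u - u * u - v * v + v * v) + (j0 + 2 * q * k0) * (v - v) = 0
              from by ring, zeta_zero, if_pos (show u - u - v + v = 0 from by ring)]
            push_cast
            field_simp
          rw [Finset.sum_congr rfl fun q _ => zterm q, Finset.sum_const]
          simp only [Finset.card_univ, ZMod.card, nsmul_eq_mul]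
          field_simp
        rw [Finset.sum_congr rfl fun j0 (_ : j0 ∈ Finset.univ) =>
          Finset.sum_congr rfl fun k0 (_ : k0 ∈ Finset.univ) => zB j0 k0]
        have hsumC2 : ∑ j0 : ZMod d, ∑ k0 : ZMod d,
            (t : ℂ) * ((c j0 k0 : ℝ) : ℂ) * ((d : ℂ))⁻¹ = (t : ℂ) * ((d : ℂ))⁻¹ := by
          have : ∑ j0 : ZMod d, ∑ k0 : ZMod d, ((c j0 k0 : ℝ) : ℂ) = 1 := by
            exact_mod_cast congrArg (Complex.ofReal) hsum
          calc ∑ j0 : ZMod d, ∑ k0 : ZMod d, (t : ℂ) * ((c j0 k0 : ℝ) : ℂ) * ((d : ℂ))⁻¹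
              = (t : ℂ) * ((d : ℂ))⁻¹ * ∑ j0 : ZMod d, ∑ k0 : ZMod d, ((c j0 k0 : ℝ) : ℂ) := by
                rw [Finset.mul_sum]
                refine Finset.sum_congr rfl fun j0 _ => ?_
                rw [Finset.mul_sum]
                exact Finset.sum_congr rfl fun k0 _ => by ring
            _ = (t : ℂ) * ((d : ℂ))⁻¹ := by rw [this, mul_one]
        rw [hsumC2]
        have hCC : ((C (v - u) : ℝ) : ℂ) = ∑ j : ZMod d, ((c j (v - u) : ℝ) : ℂ) := by
          rw [hCdef]; push_cast; rfl
        rw [← hCC, hydef]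
        push_cast
        field_simp
        ring
      · -- off-diagonal, u ≠ u'
        rw [if_neg (show ¬ (u, v) = (u', u' + v - u) from fun h => huu (Prod.ext_iff.mp h).1),
          if_pos (show (u' + v - u : ZMod d) = u' + (v - u) from by ring),
          if_neg (show ¬ (u' = u ∧ u' + v - u = v) from fun h => huu h.1.symm)]
        have hune : (u' - u : ZMod d) ≠ 0 := sub_ne_zero.mpr fun h => huu h.symm
        have hG : ∀ k0 : ZMod d, (2 * (u' - u) * ((v - u) - k0) = 0) ↔ k0 = v - u := by
          intro k0
          constructor
          · intro h
            rcases mul_eq_zero.mp h with h1 | h2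
            · exact absurd h1 (mul_ne_zero h2Z hune)
            · exact (sub_eq_zero.mp h2).symm
          · intro h; rw [h]; ring
        have B1q : ∀ j0 k0 : ZMod d, (∑ q : ZMod d,
            ((t * c j0 k0 / d : ℝ) : ℂ) * (((d : ℝ)⁻¹ : ℝ) : ℂ) * (((d : ℝ)⁻¹ : ℝ) : ℂ) *
              zeta d (q * (u * u - u' * u' - v * v + (u' + v - u) * (u' + v - u))
                + (j0 + 2 * q * k0) * (v - (u' + v - u)))
              * (if u - u' - v + (u' + v - u) = 0 then (d : ℂ) else 0))
            = if k0 = v - u then ((t * c j0 k0 / d : ℝ) : ℂ) * (((d : ℝ)⁻¹ : ℝ) : ℂ) *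
                (((d : ℝ)⁻¹ : ℝ) : ℂ) * (d : ℂ) * zeta d (j0 * (u - u')) * (d : ℂ) else 0 := by
          intro j0 k0
          have qterm : ∀ q : ZMod d,
              ((t * c j0 k0 / d : ℝ) : ℂ) * (((d : ℝ)⁻¹ : ℝ) : ℂ) * (((d : ℝ)⁻¹ : ℝ) : ℂ) *
                zeta d (q * (u * u - u' * u' - v * v + (u' + v - u) * (u' + v - u))
                  + (j0 + 2 * q * k0) * (v - (u' + v - u)))
                * (if u - u' - v + (u' + v - u) = 0 then (d : ℂ) else 0)
              = (((t * c j0 k0 / d : ℝ) : ℂ) * (((d : ℝ)⁻¹ : ℝ) : ℂ) * (((d : ℝ)⁻¹ : ℝ) : ℂ) *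
                  (d : ℂ) * zeta d (j0 * (u - u'))) *
                  zeta d ((2 * (u' - u) * ((v - u) - k0)) * q) := by
            intro q
            rw [if_pos (show u - u' - v + (u' + v - u) = 0 from by ring)]
            rw [show zeta d (q * (u * u - u' * u' - v * v + (u' + v - u) * (u' + v - u))
                + (j0 + 2 * q * k0) * (v - (u' + v - u)))
              = zeta d (j0 * (u - u')) * zeta d ((2 * (u' - u) * ((v - u) - k0)) * q) from by
                rw [← zeta_add]; congr 1; ring]
            ring
          rw [Finset.sum_congr rfl fun q _ => qterm q, ← Finset.mul_sum, sum_zeta]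
          split_ifs with hc1 hc2 hc3
          · ring
          · exact absurd ((hG k0).mp hc1) hc2
          · exact absurd ((hG k0).mpr hc3) hc1
          · ring
        rw [Finset.sum_congr rfl fun j0 (_ : j0 ∈ Finset.univ) =>
          Finset.sum_congr rfl fun k0 (_ : k0 ∈ Finset.univ) => B1q j0 k0]
        have sumk : ∀ j0 : ZMod d, (∑ k0 : ZMod d,
            if k0 = v - u then ((t * c j0 k0 / d : ℝ) : ℂ) * (((d : ℝ)⁻¹ : ℝ) : ℂ) *
              (((d : ℝ)⁻¹ : ℝ) : ℂ) * (d : ℂ) * zeta d (j0 * (u - u')) * (d : ℂ) else 0)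
            = (t : ℂ) * ((d : ℂ))⁻¹ * (((c j0 (v - u) : ℝ) : ℂ) * zeta d (j0 * (u - u'))) := by
          intro j0
          rw [Finset.sum_ite_eq' Finset.univ (v - u)]
          rw [if_pos (Finset.mem_univ _)]
          push_cast
          field_simp
        rw [Finset.sum_congr rfl fun j0 (_ : j0 ∈ Finset.univ) => sumk j0, ← Finset.mul_sum]
        ring
    · -- Delta ≠ 0 : both sides vanish
      rw [if_neg (show ¬ (u, v) = (u', v') from fun h => hDel (by
          obtain ⟨h1, h2⟩ := Prod.ext_iff.mp h
          dsimp at h1 h2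
          linear_combination h1 - h2)),
        if_neg (show ¬ v' = u' + (v - u) from fun h => hDel (by linear_combination h)),
        if_neg (show ¬ (u' = u ∧ v' = v) from fun h => hDel (by
          linear_combination h.2 - h.1))]
      rw [Finset.sum_eq_zero fun j0 (_ : j0 ∈ Finset.univ) =>
        Finset.sum_eq_zero fun k0 (_ : k0 ∈ Finset.univ) =>
        Finset.sum_eq_zero fun q (_ : q ∈ Finset.univ) => by rw [if_neg hDel]; ring]
      ring
  exact isSeparable_of_fintype ρt w σ τ h0 h1 h2 h3 h4


/-- For `d` an odd prime, nonnegative `c_{j,k}` summing to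
one, `ρ = Σ_{j,k} c_{j,k} P̃_{j,k}` and `ρ(t) = ((1−t)/d²) I + t ρ` with
`0 ≤ t ≤ 1`: if `t(1 + d − d Σ_j c_{j,r}) ≤ 1` for every `r`, then `ρ(t)` is
separable; in particular `ρ(t)` is separable whenever `t ≤ 1/(1+d)`. -/
theorem bhn_segment_separable (d : ℕ) [NeZero d] (hd : d.Prime) (hodd : Odd d)
    (c : ZMod d → ZMod d → ℝ) (hc : ∀ j k, 0 ≤ c j k)
    (hsum : ∑ j : ZMod d, ∑ k : ZMod d, c j k = 1)
    (t : ℝ) (ht0 : 0 ≤ t) (ht1 : t ≤ 1)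
    (ρ ρt : Matrix (ZMod d × ZMod d) (ZMod d × ZMod d) ℂ)
    (hρ : ρ = ∑ j : ZMod d, ∑ k : ZMod d, (c j k : ℂ) • Ptilde d j k)
    (hρt : ρt = (((1 - t) / (d : ℝ) ^ 2 : ℝ) : ℂ)
          • (1 : Matrix (ZMod d × ZMod d) (ZMod d × ZMod d) ℂ)
        + (t : ℂ) • ρ) :
    ((∀ r : ZMod d, t * (1 + (d : ℝ) - (d : ℝ) * ∑ j : ZMod d, c j r) ≤ 1) →
        IsSeparableState ρt) ∧
    (t ≤ 1 / (1 + (d : ℝ)) → IsSeparableState ρt) := by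
  subst hρ
  have key : (∀ r : ZMod d, t * (1 + (d : ℝ) - (d : ℝ) * ∑ j : ZMod d, c j r) ≤ 1) →
      IsSeparableState ρt := fun hcol => main_sep d hd hodd c hc hsum t ht0 ρt hρt hcol
  refine ⟨key, fun hle => key fun r => ?_⟩
  have hC : 0 ≤ ∑ j : ZMod d, c j r := Finset.sum_nonneg fun j _ => hc j r
  have hdpos : (0 : ℝ) < 1 + d := by positivity
  have h1 : t * (1 + (d : ℝ)) ≤ 1 := by
    rw [le_div_iff₀ hdpos] at hle
    linarith
  have h2 : 0 ≤ t * ((d : ℝ) * ∑ j : ZMod d, c j r) :=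
    mul_nonneg ht0 (mul_nonneg (by positivity) hC)
  nlinarith
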